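/- For real numbers 0 ≤ r ≤ 1 and x ≥ 0, the inequalities 1 + rx - (x²/2)·r·(1-r) ≤ (1+x)^r ≤ 1 + rx hold. -/

import Mathlib

open Real

lemma rpow_taylor_aux_deriv (r y : ℝ) (h1 : 0 < 1 + y) :
    HasDerivAt (fun y : ℝ => (1 + y) ^ r - (1 + r * y - y^2 / 2 * r * (1 - r)))
      (r * (1 + y) ^ (r - 1) - (r - y * r * (1 - r))) y := by
  have hg : HasDerivAt (fun y : ℝ => 1 + y) 1 y := by
    exact (hasDerivAt_id' y).const_add 1
  have h2 := (Real.hasDerivAt_rpow_const (p := r) (Or.inl h1.ne')).comp y hg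
  have h3 : HasDerivAt (fun y : ℝ => 1 + r * y - y^2 / 2 * r * (1 - r))
      (r - y * r * (1 - r)) y := by
    have := ((hasDerivAt_const y (1:ℝ)).add ((hasDerivAt_id y).const_mul r)).sub
      (((((hasDerivAt_id y).pow 2).div_const 2).mul_const r).mul_const (1 - r))
    exact this.congr_deriv (by simp [id_eq])
  have := h2.sub h3
  exact this.congr_deriv (by ring)

theorem rpow_taylor_bounds (r x : ℝ) (hr0 : 0 ≤ r) (hr1 : r ≤ 1) (hx : 0 ≤ x) :
    1 + r * x - x^2 / 2 * r * (1 - r) ≤ (1 + x) ^ r ∧ (1 + x) ^ r ≤ 1 + r * x := by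
  constructor
  · set f : ℝ → ℝ := fun y => (1 + y) ^ r - (1 + r * y - y^2 / 2 * r * (1 - r)) with hf
    suffices h : 0 ≤ f x by simp only [hf] at h; linarith
    have h0 : f 0 = 0 := by simp [hf]
    have hcont : ContinuousOn f (Set.Ici 0) := by
      apply ContinuousOn.sub
      · exact (continuousOn_const.add continuousOn_id).rpow_const
          (fun y hy => Or.inl (by simp at hy; simp only [Pi.add_apply, id]; positivity))
      · fun_prop
    have hmono : MonotoneOn f (Set.Ici 0) := by
      apply monotoneOn_of_deriv_nonneg (convex_Ici 0) hcont
      · intro y hy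
        rw [interior_Ici] at hy
        have h1 : (0:ℝ) < 1 + y := by simp at hy; linarith
        exact (rpow_taylor_aux_deriv r y h1).differentiableAt.differentiableWithinAt
      · intro y hy
        rw [interior_Ici] at hy
        have hy' : (0:ℝ) < y := hy
        have h1 : (0:ℝ) < 1 + y := by linarith
        rw [(rpow_taylor_aux_deriv r y h1).deriv]
        have hkey : 1 - (1 - r) * y ≤ (1 + y) ^ (r - 1) := by
          have hb : (1 + y) ^ (1 - r) ≤ 1 + (1 - r) * y :=
            rpow_one_add_le_one_add_mul_self (by linarith) (by linarith) (by linarith)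
          have hpos : (0:ℝ) < (1 + y) ^ (1 - r) := rpow_pos_of_pos h1 _
          have hpos2 : (0:ℝ) < 1 + (1 - r) * y := lt_of_lt_of_le hpos hb
          have hinv : (1 + (1 - r) * y)⁻¹ ≤ ((1 + y) ^ (1 - r))⁻¹ := inv_anti₀ hpos hb
          have heq : (1 + y) ^ (r - 1) = ((1 + y) ^ (1 - r))⁻¹ := by
            rw [← rpow_neg h1.le]; ring_nf
          have hstep : 1 - (1 - r) * y ≤ (1 + (1 - r) * y)⁻¹ := by
            rw [inv_eq_one_div, le_div_iff₀ hpos2]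
            nlinarith [sq_nonneg ((1 - r) * y)]
          rw [heq]
          exact hstep.trans hinv
        have : 0 ≤ r * ((1 + y) ^ (r - 1) - (1 - (1 - r) * y)) :=
          mul_nonneg hr0 (by linarith)
        nlinarith [this]
    have := hmono (Set.self_mem_Ici) (Set.mem_Ici.mpr hx) hx
    linarith [h0 ▸ this]
  · exact rpow_one_add_le_one_add_mul_self (by linarith) hr0 hr1
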